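/- arXiv:math-ph/0201008 — 2 statements merged into one kernel-verified Lean document; each statement's English description precedes it below -/
import Mathlib

section
/- Let a, b, c : ℝ → ℂ be continuous and set A(t) = ∫₀ᵗ a, B(t) = ∫₀ᵗ b, C(t) = ∫₀ᵗ c, H₁(t) = ∫₀ᵗ b·C, H₂(t) = ∫₀ᵗ c·A, H₃(t) = ∫₀ᵗ a·B. Assume that A, B, C, H₁, H₂, H₃ are all bounded on ℝ and that the mean values M(a·H₁), M(b·H₂), M(c·H₃) exist. Then M(a·H₁) + M(b·H₂) + M(c·H₃) = 0, i.e., M( a(t)·∫₀ᵗ b(τ)(∫₀^τ c) dτ ) + M( b(t)·∫₀ᵗ c(τ)(∫₀^τ a) dτ ) + M( c(t)·∫₀ᵗ a(τ)(∫₀^τ b) dτ ) = 0. -/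
open Filter

noncomputable section

/-- The mean value `M(h)` of a function `h : ℝ → ℂ`:
`M(h) = L` iff `(1/(2T)) ∫_{-T}^{T} h(t) dt → L` as `T → +∞`. -/
def MeanValueIs (h : ℝ → ℂ) (L : ℂ) : Prop :=
  Tendsto (fun T : ℝ => (1 / (2 * T)) • ∫ t in (-T)..T, h t) atTop (nhds L)

lemma hasDerivAt_primitive' (f : ℝ → ℂ) (hf : Continuous f) (t : ℝ) :
    HasDerivAt (fun u => ∫ x in (0:ℝ)..u, f x) (f t) t :=
  intervalIntegral.integral_hasDerivAt_right (hf.intervalIntegrable _ _)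
    (hf.stronglyMeasurable.stronglyMeasurableAtFilter) hf.continuousAt

theorem mean_value_cyclic_identity
    (a b c : ℝ → ℂ) (ha : Continuous a) (hb : Continuous b) (hc : Continuous c)
    (A B C H₁ H₂ H₃ : ℝ → ℂ)
    (hA : ∀ t : ℝ, A t = ∫ τ in (0:ℝ)..t, a τ)
    (hB : ∀ t : ℝ, B t = ∫ τ in (0:ℝ)..t, b τ)
    (hC : ∀ t : ℝ, C t = ∫ τ in (0:ℝ)..t, c τ)
    (hH₁ : ∀ t : ℝ, H₁ t = ∫ τ in (0:ℝ)..t, b τ * C τ)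
    (hH₂ : ∀ t : ℝ, H₂ t = ∫ τ in (0:ℝ)..t, c τ * A τ)
    (hH₃ : ∀ t : ℝ, H₃ t = ∫ τ in (0:ℝ)..t, a τ * B τ)
    (hAbdd : ∃ M : ℝ, ∀ t : ℝ, ‖A t‖ ≤ M)
    (hBbdd : ∃ M : ℝ, ∀ t : ℝ, ‖B t‖ ≤ M)
    (hCbdd : ∃ M : ℝ, ∀ t : ℝ, ‖C t‖ ≤ M)
    (hH₁bdd : ∃ M : ℝ, ∀ t : ℝ, ‖H₁ t‖ ≤ M)
    (hH₂bdd : ∃ M : ℝ, ∀ t : ℝ, ‖H₂ t‖ ≤ M)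
    (hH₃bdd : ∃ M : ℝ, ∀ t : ℝ, ‖H₃ t‖ ≤ M)
    (L₁ L₂ L₃ : ℂ)
    (hL₁ : MeanValueIs (fun t => a t * H₁ t) L₁)
    (hL₂ : MeanValueIs (fun t => b t * H₂ t) L₂)
    (hL₃ : MeanValueIs (fun t => c t * H₃ t) L₃) :
    L₁ + L₂ + L₃ = 0 := by
  -- derivatives of A, B, C
  have hA' : ∀ t, HasDerivAt A (a t) t := fun t =>
    (hasDerivAt_primitive' a ha t).congr_of_eventuallyEq
      (Eventually.of_forall fun u => hA u)
  have hB' : ∀ t, HasDerivAt B (b t) t := fun t =>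
    (hasDerivAt_primitive' b hb t).congr_of_eventuallyEq
      (Eventually.of_forall fun u => hB u)
  have hC' : ∀ t, HasDerivAt C (c t) t := fun t =>
    (hasDerivAt_primitive' c hc t).congr_of_eventuallyEq
      (Eventually.of_forall fun u => hC u)
  have hAc : Continuous A :=
    continuous_iff_continuousAt.mpr fun t => (hA' t).continuousAt
  have hBc : Continuous B :=
    continuous_iff_continuousAt.mpr fun t => (hB' t).continuousAt
  have hCc : Continuous C :=
    continuous_iff_continuousAt.mpr fun t => (hC' t).continuousAt
  -- derivatives of H₁, H₂, H₃
  have hH₁' : ∀ t, HasDerivAt H₁ (b t * C t) t := fun t =>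
    (hasDerivAt_primitive' _ (hb.mul hCc) t).congr_of_eventuallyEq
      (Eventually.of_forall fun u => hH₁ u)
  have hH₂' : ∀ t, HasDerivAt H₂ (c t * A t) t := fun t =>
    (hasDerivAt_primitive' _ (hc.mul hAc) t).congr_of_eventuallyEq
      (Eventually.of_forall fun u => hH₂ u)
  have hH₃' : ∀ t, HasDerivAt H₃ (a t * B t) t := fun t =>
    (hasDerivAt_primitive' _ (ha.mul hBc) t).congr_of_eventuallyEq
      (Eventually.of_forall fun u => hH₃ u)
  have hH₁c : Continuous H₁ :=
    continuous_iff_continuousAt.mpr fun t => (hH₁' t).continuousAt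
  have hH₂c : Continuous H₂ :=
    continuous_iff_continuousAt.mpr fun t => (hH₂' t).continuousAt
  have hH₃c : Continuous H₃ :=
    continuous_iff_continuousAt.mpr fun t => (hH₃' t).continuousAt
  -- the antiderivative G of a·H₁ + b·H₂ + c·H₃
  set G : ℝ → ℂ :=
    fun t => A t * H₁ t + B t * H₂ t + C t * H₃ t - A t * B t * C t with hGdef
  have hG' : ∀ t, HasDerivAt G (a t * H₁ t + b t * H₂ t + c t * H₃ t) t := by
    intro t
    have h1 := ((hA' t).mul (hH₁' t)).add ((hB' t).mul (hH₂' t)) |>.add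
      ((hC' t).mul (hH₃' t)) |>.sub (((hA' t).mul (hB' t)).mul (hC' t))
    convert h1 using 1
    · rfl
    · rfl
    · simp only [Pi.mul_apply]; ring
  -- f := a·H₁ + b·H₂ + c·H₃ is continuous
  set f : ℝ → ℂ := fun t => a t * H₁ t + b t * H₂ t + c t * H₃ t with hfdef
  have hfc : Continuous f := ((ha.mul hH₁c).add (hb.mul hH₂c)).add (hc.mul hH₃c)
  -- FTC: ∫_{-T}^{T} f = G T - G (-T)
  have hFTC : ∀ T : ℝ, (∫ t in (-T)..T, f t) = G T - G (-T) := fun T =>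
    intervalIntegral.integral_eq_sub_of_hasDerivAt (fun t _ => hG' t)
      (hfc.intervalIntegrable _ _)
  -- G is bounded
  obtain ⟨Ma, hMa⟩ := hAbdd
  obtain ⟨Mb, hMb⟩ := hBbdd
  obtain ⟨Mc, hMc⟩ := hCbdd
  obtain ⟨M1, hM1⟩ := hH₁bdd
  obtain ⟨M2, hM2⟩ := hH₂bdd
  obtain ⟨M3, hM3⟩ := hH₃bdd
  have hMa0 : 0 ≤ Ma := le_trans (norm_nonneg _) (hMa 0)
  have hMb0 : 0 ≤ Mb := le_trans (norm_nonneg _) (hMb 0)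
  have hMc0 : 0 ≤ Mc := le_trans (norm_nonneg _) (hMc 0)
  set K : ℝ := Ma * M1 + Mb * M2 + Mc * M3 + Ma * Mb * Mc with hKdef
  have hGbdd : ∀ t, ‖G t‖ ≤ K := by
    intro t
    calc ‖G t‖ ≤ ‖A t * H₁ t + B t * H₂ t + C t * H₃ t‖ + ‖A t * B t * C t‖ :=
          norm_sub_le _ _
      _ ≤ (‖A t * H₁ t‖ + ‖B t * H₂ t‖ + ‖C t * H₃ t‖) + ‖A t * B t * C t‖ := by
          gcongr
          exact norm_add₃_le
      _ ≤ (Ma * M1 + Mb * M2 + Mc * M3) + Ma * Mb * Mc := by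
          gcongr ?_ + ?_
          · rw [norm_mul, norm_mul, norm_mul]
            gcongr (?_ + ?_) + ?_
            · exact mul_le_mul (hMa t) (hM1 t) (norm_nonneg _) hMa0
            · exact mul_le_mul (hMb t) (hM2 t) (norm_nonneg _) hMb0
            · exact mul_le_mul (hMc t) (hM3 t) (norm_nonneg _) hMc0
          · rw [norm_mul, norm_mul]
            exact mul_le_mul (mul_le_mul (hMa t) (hMb t) (norm_nonneg _) hMa0)
              (hMc t) (norm_nonneg _) (mul_nonneg hMa0 hMb0)
      _ = K := rfl
  -- the mean of f tends to 0
  have htendszero :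
      Tendsto (fun T : ℝ => (1 / (2 * T)) • ∫ t in (-T)..T, f t) atTop (nhds 0) := by
    have hbound : ∀ᶠ T : ℝ in atTop,
        ‖(1 / (2 * T)) • ∫ t in (-T)..T, f t‖ ≤ K / T := by
      filter_upwards [eventually_gt_atTop (0 : ℝ)] with T hT
      rw [hFTC T, norm_smul, Real.norm_eq_abs, abs_of_pos (by positivity)]
      have h2 : ‖G T - G (-T)‖ ≤ 2 * K :=
        le_trans (norm_sub_le _ _) (by linarith [hGbdd T, hGbdd (-T)])
      calc (1 / (2 * T)) * ‖G T - G (-T)‖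
          ≤ (1 / (2 * T)) * (2 * K) :=
            mul_le_mul_of_nonneg_left h2 (by positivity)
        _ = K / T := by field_simp
    have hdiv : Tendsto (fun T : ℝ => K / T) atTop (nhds 0) :=
      Tendsto.div_atTop tendsto_const_nhds tendsto_id
    exact squeeze_zero_norm' hbound hdiv
  -- the mean of f tends to L₁ + L₂ + L₃
  have htendsL :
      Tendsto (fun T : ℝ => (1 / (2 * T)) • ∫ t in (-T)..T, f t) atTop
        (nhds (L₁ + L₂ + L₃)) := by
    have hsum := (hL₁.add hL₂).add hL₃
    apply hsum.congr
    intro T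
    have hi1 : IntervalIntegrable (fun t => a t * H₁ t) MeasureTheory.volume (-T) T :=
      (ha.mul hH₁c).intervalIntegrable _ _
    have hi2 : IntervalIntegrable (fun t => b t * H₂ t) MeasureTheory.volume (-T) T :=
      (hb.mul hH₂c).intervalIntegrable _ _
    have hi3 : IntervalIntegrable (fun t => c t * H₃ t) MeasureTheory.volume (-T) T :=
      (hc.mul hH₃c).intervalIntegrable _ _
    show (1 / (2 * T)) • (∫ t in (-T)..T, a t * H₁ t)
        + (1 / (2 * T)) • (∫ t in (-T)..T, b t * H₂ t)
        + (1 / (2 * T)) • (∫ t in (-T)..T, c t * H₃ t)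
        = (1 / (2 * T)) • ∫ t in (-T)..T, f t
    rw [hfdef]
    rw [intervalIntegral.integral_add (hi1.add hi2) hi3,
      intervalIntegral.integral_add hi1 hi2, smul_add, smul_add]
  exact tendsto_nhds_unique htendsL htendszero
end
end

section
/- Let χ > 0 and ω > 0. There exists a constant β > 0 (depending only on χ and ω) with the following property: whenever A¹, A² : ℤ → ℂ and α₁, α₂ > 0 satisfy |Aˡ(m)| ≤ αₗ·e^{−χ|m|}/⟨m⟩² for all m ∈ ℤ and l = 1, 2, and one defines Ã(m) = A²(m)/(i·m·ω) for m ≠ 0 and Ã(0) = −(1/(iω))·Σ_{k∈ℤ, k≠0} A²(k)/k, then for all m ∈ ℤ the convolution R(m) = Σ_{n∈ℤ} A¹(m−n)·Ã(n) converges absolutely and satisfies |R(m)| ≤ β·α₁·α₂·e^{−χ|m|}/⟨m⟩². -/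
noncomputable section

/-- `⟨m⟩ = |m|` for `m ≠ 0` and `⟨0⟩ = 1`. -/
def jnorm (m : ℤ) : ℝ := if m = 0 then 1 else |(m : ℝ)|

lemma jnorm_one_le (m : ℤ) : 1 ≤ jnorm m := by
  by_cases h : m = 0
  · simp [jnorm, h]
  · rw [jnorm, if_neg h, ← Int.cast_abs]
    exact_mod_cast Int.one_le_abs h

lemma jnorm_pos (m : ℤ) : 0 < jnorm m := lt_of_lt_of_le one_pos (jnorm_one_le m)

lemma abs_le_jnorm (m : ℤ) : |(m : ℝ)| ≤ jnorm m := by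
  unfold jnorm
  split
  · next h => simp [h]
  · exact le_refl _

lemma jnorm_le_add (m n : ℤ) : jnorm m ≤ jnorm (m - n) + jnorm n := by
  by_cases hm : m = 0
  · subst hm
    have h1 := jnorm_one_le (0 - n)
    have h2 := jnorm_one_le n
    have h3 : jnorm 0 = 1 := by simp [jnorm]
    rw [h3]
    linarith
  · have : jnorm m = |(m : ℝ)| := by simp [jnorm, hm]
    rw [this]
    have habs : |(m : ℝ)| ≤ |((m - n : ℤ) : ℝ)| + |(n : ℝ)| := by
      have : (m : ℝ) = ((m - n : ℤ) : ℝ) + (n : ℝ) := by push_cast; ring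
      rw [this]
      exact abs_add_le _ _
    exact habs.trans (add_le_add (abs_le_jnorm _) (abs_le_jnorm _))

lemma summable_inv_jnorm_sq : Summable (fun n : ℤ => (jnorm n ^ 2)⁻¹) := by
  have h1 : Summable (fun n : ℤ => ((n:ℝ)^2)⁻¹) := by
    have := (Real.summable_one_div_int_pow (p := 2)).2 (by norm_num)
    simpa [one_div] using this
  have h2 : Summable (fun n : ℤ => if n = 0 then (1:ℝ) else 0) := by
    apply summable_of_ne_finset_zero (s := {0})
    intro b hb
    simp [Finset.mem_singleton.not.mp hb]
  have h3 := h1.add h2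
  apply h3.congr
  intro n
  by_cases hn : n = 0
  · simp [hn, jnorm]
  · simp [hn, jnorm, sq_abs]

lemma key_ineq (a b c : ℝ) (ha : 1 ≤ a) (hb : 1 ≤ b) (hc : 0 < c) (h : c ≤ a + b) :
    (a^2*b^2)⁻¹ ≤ 4 / c^2 * ((a^2)⁻¹ + (b^2)⁻¹) := by
  have ha0 : (0:ℝ) < a := by linarith
  have hb0 : (0:ℝ) < b := by linarith
  have key : c^2 ≤ 2*(a^2+b^2) := by nlinarith [sq_nonneg (a-b)]
  rw [inv_eq_one_div, inv_eq_one_div, inv_eq_one_div,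
    div_add_div _ _ (by positivity) (by positivity), div_mul_div_comm,
    div_le_div_iff₀ (by positivity) (by positivity)]
  nlinarith [mul_pos (mul_pos ha0 ha0) (mul_pos hb0 hb0), sq_nonneg (a*b),
    mul_le_mul_of_nonneg_right key (le_of_lt (mul_pos (mul_pos ha0 ha0) (mul_pos hb0 hb0)))]

theorem renormalised_primitive_coefficient_bound
    (χ ω : ℝ) (hχ : 0 < χ) (hω : 0 < ω) :
    ∃ β : ℝ, 0 < β ∧
      ∀ (A₁ A₂ : ℤ → ℂ) (α₁ α₂ : ℝ), 0 < α₁ → 0 < α₂ →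
        (∀ m : ℤ, ‖A₁ m‖ ≤ α₁ * Real.exp (-χ * |(m : ℝ)|) / jnorm m ^ 2) →
        (∀ m : ℤ, ‖A₂ m‖ ≤ α₂ * Real.exp (-χ * |(m : ℝ)|) / jnorm m ^ 2) →
        ∀ Atil : ℤ → ℂ,
          (∀ m : ℤ, m ≠ 0 → Atil m = A₂ m / (Complex.I * (m : ℂ) * (ω : ℂ))) →
          (Atil 0 = -(1 / (Complex.I * (ω : ℂ))) *
            ∑' k : ℤ, if k = 0 then (0 : ℂ) else A₂ k / (k : ℂ)) →
          ∀ m : ℤ,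
            Summable (fun n : ℤ => ‖A₁ (m - n) * Atil n‖) ∧
            ‖∑' n : ℤ, A₁ (m - n) * Atil n‖
              ≤ β * α₁ * α₂ * Real.exp (-χ * |(m : ℝ)|) / jnorm m ^ 2 := by
  classical
  -- the master decay function
  set F : ℤ → ℝ := fun n => Real.exp (-χ * |(n : ℝ)|) / jnorm n ^ 2 with hF
  have hF_nonneg : ∀ n, 0 ≤ F n := fun n => by
    have := jnorm_pos n; positivity
  have hF_le : ∀ n, F n ≤ (jnorm n ^ 2)⁻¹ := by
    intro n
    have h1 : Real.exp (-χ * |(n : ℝ)|) ≤ 1 := by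
      rw [Real.exp_le_one_iff]
      have : (0:ℝ) ≤ |(n:ℝ)| := abs_nonneg _
      nlinarith
    have h2 : (0:ℝ) < jnorm n ^ 2 := by have := jnorm_pos n; positivity
    rw [div_le_iff₀ h2, inv_mul_cancel₀ (ne_of_gt h2)]
    exact h1
  have hF_summable : Summable F :=
    Summable.of_nonneg_of_le hF_nonneg hF_le summable_inv_jnorm_sq
  have hF_le_one : ∀ n, F n ≤ 1 := fun n =>
    (hF_le n).trans (by
      have h1 := jnorm_one_le n
      rw [inv_le_one_iff₀]
      right; nlinarith)
  set S : ℝ := ∑' n : ℤ, (jnorm n ^ 2)⁻¹ with hS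
  set T : ℝ := ∑' n : ℤ, F n with hT
  have hS_one_le : 1 ≤ S := by
    have h0 : (jnorm (0:ℤ) ^ 2)⁻¹ = 1 := by simp [jnorm]
    calc (1:ℝ) = (jnorm (0:ℤ) ^ 2)⁻¹ := h0.symm
    _ ≤ S := Summable.le_tsum summable_inv_jnorm_sq 0 (fun n _ => by
        have := jnorm_pos n; positivity)
  have hT_one_le : 1 ≤ T := by
    have h0 : F 0 = 1 := by simp [hF, jnorm]
    calc (1:ℝ) = F 0 := h0.symm
    _ ≤ T := Summable.le_tsum hF_summable 0 (fun n _ => hF_nonneg n)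
  refine ⟨8 * S * T / ω, by positivity, ?_⟩
  intro A₁ A₂ α₁ α₂ hα₁ hα₂ hA₁ hA₂ Atil hAt h0 m
  -- bound on Atil
  have hAtil : ∀ n, ‖Atil n‖ ≤ α₂ * T / ω * F n := by
    intro n
    by_cases hn : n = 0
    · subst hn
      rw [h0]
      have hnorm_c : ‖-(1 / (Complex.I * (ω : ℂ)))‖ = 1 / ω := by
        simp [norm_div, abs_of_pos hω]
      have hterm : ∀ k : ℤ, ‖if k = 0 then (0:ℂ) else A₂ k / (k:ℂ)‖ ≤ α₂ * F k := by
        intro k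
        by_cases hk : k = 0
        · simp [hk]
          positivity
        · simp only [if_neg hk]
          have hk1 : (1:ℝ) ≤ |(k:ℝ)| := by
            rw [← Int.cast_abs]; exact_mod_cast Int.one_le_abs hk
          have hknorm : ‖((k:ℤ):ℂ)‖ = |(k:ℝ)| := by
            rw [Complex.norm_intCast, ← Int.cast_abs, Int.cast_abs]
          rw [norm_div, hknorm]
          have hjk : jnorm k = |(k:ℝ)| := by simp [jnorm, hk]
          have hA := hA₂ k
          rw [div_le_iff₀ (by linarith)]
          calc ‖A₂ k‖ ≤ α₂ * Real.exp (-χ * |(k:ℝ)|) / jnorm k ^ 2 := hA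
          _ = α₂ * F k := by rw [hF]; ring
          _ ≤ α₂ * F k * |(k:ℝ)| := by
              nlinarith [hF_nonneg k, mul_nonneg hα₂.le (hF_nonneg k)]
      have hsum_norm : Summable (fun k : ℤ => ‖if k = 0 then (0:ℂ) else A₂ k / (k:ℂ)‖) :=
        Summable.of_nonneg_of_le (fun k => norm_nonneg _) hterm
          (hF_summable.mul_left α₂)
      calc ‖-(1 / (Complex.I * (ω : ℂ))) * ∑' k : ℤ, if k = 0 then (0:ℂ) else A₂ k / (k:ℂ)‖
          = (1/ω) * ‖∑' k : ℤ, if k = 0 then (0:ℂ) else A₂ k / (k:ℂ)‖ := by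
            rw [norm_mul, hnorm_c]
      _ ≤ (1/ω) * ∑' k : ℤ, ‖if k = 0 then (0:ℂ) else A₂ k / (k:ℂ)‖ := by
            gcongr
            exact norm_tsum_le_tsum_norm hsum_norm
      _ ≤ (1/ω) * ∑' k : ℤ, α₂ * F k := by
            exact mul_le_mul_of_nonneg_left
              (Summable.tsum_le_tsum hterm hsum_norm (hF_summable.mul_left α₂)) (by positivity)
      _ = (1/ω) * (α₂ * T) := by rw [tsum_mul_left]
      _ = α₂ * T / ω * F 0 := by simp [hF, jnorm]; ring
    · rw [hAt n hn]
      have hjn : jnorm n = |(n:ℝ)| := by simp [jnorm, hn]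
      have hn1 : (1:ℝ) ≤ |(n:ℝ)| := by
        rw [← Int.cast_abs]; exact_mod_cast Int.one_le_abs hn
      have hdenom : ‖Complex.I * (n:ℂ) * (ω:ℂ)‖ = |(n:ℝ)| * ω := by
        simp [norm_mul, abs_of_pos hω]
      rw [norm_div, hdenom]
      rw [div_le_iff₀ (by positivity)]
      have hA := hA₂ n
      calc ‖A₂ n‖ ≤ α₂ * Real.exp (-χ * |(n:ℝ)|) / jnorm n ^ 2 := hA
      _ = α₂ * F n := by rw [hF]; ring
      _ ≤ α₂ * T * F n := by nlinarith [hF_nonneg n, mul_nonneg hα₂.le (hF_nonneg n)]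
      _ = α₂ * T / ω * F n * (1 * ω) := by field_simp
      _ ≤ α₂ * T / ω * F n * (|(n:ℝ)| * ω) := by
          have h1 : 0 ≤ α₂ * T / ω * F n := by
            have := hF_nonneg n; positivity
          gcongr
  -- bound on A₁
  have hA₁' : ∀ k, ‖A₁ k‖ ≤ α₁ * F k := by
    intro k
    calc ‖A₁ k‖ ≤ α₁ * Real.exp (-χ * |(k:ℝ)|) / jnorm k ^ 2 := hA₁ k
    _ = α₁ * F k := by rw [hF]; ring
  -- product bound
  set K : ℝ := α₁ * (α₂ * T / ω) with hK
  have hK_pos : 0 < K := by positivity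
  have hprod : ∀ n, ‖A₁ (m - n) * Atil n‖ ≤ K * (F (m - n) * F n) := by
    intro n
    rw [norm_mul, hK]
    calc ‖A₁ (m-n)‖ * ‖Atil n‖ ≤ (α₁ * F (m-n)) * (α₂ * T / ω * F n) := by
          apply mul_le_mul (hA₁' _) (hAtil n) (norm_nonneg _)
          positivity
    _ = α₁ * (α₂ * T / ω) * (F (m-n) * F n) := by ring
  -- summability of the convolution
  have hdom : ∀ n, K * (F (m - n) * F n) ≤ K * F n := by
    intro n
    have h1 := hF_le_one (m - n)
    have hfn := hF_nonneg n
    have h2 : F (m - n) * F n ≤ F n := by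
      nlinarith [mul_nonneg (sub_nonneg.2 h1) hfn]
    exact mul_le_mul_of_nonneg_left h2 hK_pos.le
  have hsum : Summable (fun n : ℤ => ‖A₁ (m - n) * Atil n‖) := by
    apply Summable.of_nonneg_of_le (fun n => norm_nonneg _)
      (fun n => (hprod n).trans (hdom n)) (hF_summable.mul_left K)
  refine ⟨hsum, ?_⟩
  -- key pointwise convolution estimate
  set E : ℝ := Real.exp (-χ * |(m:ℝ)|) with hE
  have hE_pos : 0 < E := Real.exp_pos _
  have hconv : ∀ n, F (m - n) * F n ≤
      E * (4 / jnorm m ^ 2) * ((jnorm (m - n) ^ 2)⁻¹ + (jnorm n ^ 2)⁻¹) := by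
    intro n
    have habs : |(m:ℝ)| ≤ |((m - n : ℤ):ℝ)| + |(n:ℝ)| := by
      have : (m : ℝ) = ((m - n : ℤ) : ℝ) + (n : ℝ) := by push_cast; ring
      rw [this]; exact abs_add_le _ _
    have hexp : Real.exp (-χ * |((m-n:ℤ):ℝ)|) * Real.exp (-χ * |(n:ℝ)|) ≤ E := by
      rw [← Real.exp_add, hE, Real.exp_le_exp]
      nlinarith
    have hkey := key_ineq (jnorm (m - n)) (jnorm n) (jnorm m)
      (jnorm_one_le _) (jnorm_one_le _) (jnorm_pos _) (jnorm_le_add m n)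
    have hexp_nonneg : 0 ≤ Real.exp (-χ * |((m-n:ℤ):ℝ)|) * Real.exp (-χ * |(n:ℝ)|) :=
      by positivity
    have hrhs_nonneg : 0 ≤ (jnorm (m-n) ^ 2 * jnorm n ^ 2)⁻¹ := by
      have := jnorm_pos (m - n); have := jnorm_pos n; positivity
    calc F (m - n) * F n
        = (Real.exp (-χ * |((m-n:ℤ):ℝ)|) * Real.exp (-χ * |(n:ℝ)|)) *
          (jnorm (m-n) ^ 2 * jnorm n ^ 2)⁻¹ := by
          rw [hF]
          simp only []
          rw [mul_inv]
          field_simp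
    _ ≤ E * (jnorm (m-n) ^ 2 * jnorm n ^ 2)⁻¹ := by
          exact mul_le_mul_of_nonneg_right hexp hrhs_nonneg
    _ ≤ E * (4 / jnorm m ^ 2 * ((jnorm (m-n) ^ 2)⁻¹ + (jnorm n ^ 2)⁻¹)) := by
          exact mul_le_mul_of_nonneg_left hkey hE_pos.le
    _ = E * (4 / jnorm m ^ 2) * ((jnorm (m-n) ^ 2)⁻¹ + (jnorm n ^ 2)⁻¹) := by ring
  -- summability of pieces
  have hsum_shift : Summable (fun n : ℤ => (jnorm (m - n) ^ 2)⁻¹) := by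
    have : Function.Injective (fun n : ℤ => m - n) := fun a b h => by
      simp only at h; omega
    exact summable_inv_jnorm_sq.comp_injective this
  have htsum_shift : ∑' n : ℤ, (jnorm (m - n) ^ 2)⁻¹ = S :=
    (Equiv.subLeft m).tsum_eq (fun n => (jnorm n ^ 2)⁻¹)
  have hsum_rhs : Summable (fun n : ℤ =>
      K * (E * (4 / jnorm m ^ 2) * ((jnorm (m - n) ^ 2)⁻¹ + (jnorm n ^ 2)⁻¹))) := by
    apply Summable.mul_left
    apply Summable.mul_left
    exact hsum_shift.add summable_inv_jnorm_sq
  have hsum_mid : Summable (fun n : ℤ => K * (F (m - n) * F n)) := by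
    apply Summable.of_nonneg_of_le
      (fun n => by have := hF_nonneg (m-n); have := hF_nonneg n; positivity)
      (fun n => hdom n) (hF_summable.mul_left K)
  -- final chain
  have hjm := jnorm_pos m
  calc ‖∑' n : ℤ, A₁ (m - n) * Atil n‖
      ≤ ∑' n : ℤ, ‖A₁ (m - n) * Atil n‖ := norm_tsum_le_tsum_norm hsum
  _ ≤ ∑' n : ℤ, K * (F (m - n) * F n) := Summable.tsum_le_tsum hprod hsum hsum_mid
  _ ≤ ∑' n : ℤ, K * (E * (4 / jnorm m ^ 2) * ((jnorm (m - n) ^ 2)⁻¹ + (jnorm n ^ 2)⁻¹)) := by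
      apply Summable.tsum_le_tsum _ hsum_mid hsum_rhs
      intro n
      exact mul_le_mul_of_nonneg_left (hconv n) hK_pos.le
  _ = K * (E * (4 / jnorm m ^ 2) * (S + S)) := by
      rw [tsum_mul_left, tsum_mul_left,
        Summable.tsum_add hsum_shift summable_inv_jnorm_sq, htsum_shift]
  _ = 8 * S * T / ω * α₁ * α₂ * E / jnorm m ^ 2 := by
      rw [hK]; field_simp; ring
  _ = 8 * S * T / ω * α₁ * α₂ * Real.exp (-χ * |(m:ℝ)|) / jnorm m ^ 2 := by rw [hE]
end
end
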